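/- arXiv:1408.4042 — 2 statements merged into one kernel-verified Lean document; each statement's English description precedes it below -/
import Mathlib

section
/- Let G be a group containing a central element z of order 2 and a normal subgroup V = ⟨x,z⟩ isomorphic to (ℤ/2)^2 with G/V cyclic of order m a power of 2, generated by the image of g. If gxg⁻¹ = xz and g^m = 1, then g has order 2 and G is isomorphic to the dihedral group D_8 of order 8. -/
lemma invol_matrix_aux (M : Matrix (Fin 2) (Fin 2) ℂ) (h1 : M * M = 1)
    (h2 : M.det = 1) : M = 1 ∨ M = -1 := by
  have e00 : M 0 0 * M 0 0 + M 0 1 * M 1 0 = 1 := by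
    have := congrFun (congrFun h1 0) 0
    simpa [Matrix.mul_apply, Fin.sum_univ_two, Matrix.one_apply] using this
  have e01 : M 0 0 * M 0 1 + M 0 1 * M 1 1 = 0 := by
    have := congrFun (congrFun h1 0) 1
    simpa [Matrix.mul_apply, Fin.sum_univ_two, Matrix.one_apply] using this
  have e10 : M 1 0 * M 0 0 + M 1 1 * M 1 0 = 0 := by
    have := congrFun (congrFun h1 1) 0
    simpa [Matrix.mul_apply, Fin.sum_univ_two, Matrix.one_apply] using this
  have hdet : M 0 0 * M 1 1 - M 0 1 * M 1 0 = 1 := by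
    rw [Matrix.det_fin_two] at h2; exact h2
  have htr : M 0 0 + M 1 1 ≠ 0 := by
    intro h
    have h2' : (2 : ℂ) = 0 := by linear_combination (M 0 0) * h - e00 - hdet
    norm_num at h2'
  have hb : M 0 1 = 0 := by
    rcases mul_eq_zero.mp (show M 0 1 * (M 0 0 + M 1 1) = 0 by linear_combination e01) with h | h
    · exact h
    · exact absurd h htr
  have hc : M 1 0 = 0 := by
    rcases mul_eq_zero.mp (show M 1 0 * (M 0 0 + M 1 1) = 0 by linear_combination e10) with h | h
    · exact h
    · exact absurd h htr
  have ha2 : M 0 0 * M 0 0 = 1 := by linear_combination e00 - M 1 0 * hb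
  have hd : M 1 1 = M 0 0 := by
    have hne : M 0 0 ≠ 0 := by
      intro h; rw [h] at ha2; norm_num at ha2
    have : M 0 0 * (M 1 1 - M 0 0) = 0 := by linear_combination hdet - ha2 + M 1 0 * hb
    rcases mul_eq_zero.mp this with h | h
    · exact absurd h hne
    · linear_combination h
  rcases mul_self_eq_one_iff.mp ha2 with h | h
  · left; ext i j; fin_cases i <;> fin_cases j <;>
      simp [Matrix.one_apply, hb, hc, hd, h]
  · right; ext i j; fin_cases i <;> fin_cases j <;>
      simp [Matrix.one_apply, hb, hc, hd, h]

/-- Let `G` be a group containing a central element `z` of order 2 and a normal subgroup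
`V = ⟨x, z⟩ ≅ (ℤ/2)²` with `G/V` cyclic of order `m` a power of 2, generated by the image
of `g`.  Assume moreover that `G` embeds into `GL(2, ℂ)`.  If `g * x * g⁻¹ = x * z` and
`g ^ m = 1`, then `g` has order 2 and `G` is isomorphic to the dihedral group `D₈`
of order 8. -/
theorem dihedral_of_conj_relation_and_gm_eq_one
    {G : Type*} [Group G] (x z g : G) (m : ℕ)
    (hm2 : 2 ≤ m) (hmpow : ∃ k : ℕ, m = 2 ^ k)
    (hz : z ∈ Subgroup.center G) (hzo : orderOf z = 2)
    (hxo : orderOf x = 2) (hxz : x ≠ z)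
    (hnorm : (Subgroup.closure ({x, z} : Set G)).Normal)
    (hgen : ∀ a : G, ∃ k : ℤ, a * (g ^ k)⁻¹ ∈ Subgroup.closure ({x, z} : Set G))
    (hcard : Nat.card (G ⧸ Subgroup.closure ({x, z} : Set G)) = m)
    (φ : G →* Matrix.GeneralLinearGroup (Fin 2) ℂ) (hφ : Function.Injective φ)
    (hconj : g * x * g⁻¹ = x * z) (hgm : g ^ m = 1) :
    orderOf g = 2 ∧ Nonempty (G ≃* DihedralGroup 4) := by
  classical
  set V := Subgroup.closure ({x, z} : Set G) with hV
  haveI := hnorm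
  -- basic facts
  have hzc : ∀ a : G, a * z = z * a := fun a => Subgroup.mem_center_iff.mp hz a
  have hx2 : x * x = 1 := by
    have h := pow_orderOf_eq_one x; rwa [hxo, pow_two] at h
  have hz2 : z * z = 1 := by
    have h := pow_orderOf_eq_one z; rwa [hzo, pow_two] at h
  have hx1 : x ≠ 1 := by intro h; rw [h, orderOf_one] at hxo; norm_num at hxo
  have hz1 : z ≠ 1 := by intro h; rw [h, orderOf_one] at hzo; norm_num at hzo
  have hxmem : x ∈ V := Subgroup.subset_closure (by simp)
  have hzmem : z ∈ V := Subgroup.subset_closure (by simp)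
  have hxinv : x⁻¹ = x := inv_eq_of_mul_eq_one_left hx2
  -- conjugation by powers of g
  have hgj : ∀ j : ℕ, g ^ j * x * (g ^ j)⁻¹ = x * z ^ j := by
    intro j
    induction j with
    | zero => simp
    | succ n ih =>
      have hcz : z ^ n * g⁻¹ = g⁻¹ * z ^ n :=
        ((show Commute z g⁻¹ from (hzc g⁻¹).symm).pow_left n).eq
      calc g ^ (n+1) * x * (g ^ (n+1))⁻¹ = g * (g ^ n * x * (g ^ n)⁻¹) * g⁻¹ := by group
        _ = g * (x * z ^ n) * g⁻¹ := by rw [ih]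
        _ = g * x * (z ^ n * g⁻¹) := by group
        _ = g * x * (g⁻¹ * z ^ n) := by rw [hcz]
        _ = (g * x * g⁻¹) * z ^ n := by group
        _ = x * z * z ^ n := by rw [hconj]
        _ = x * z ^ (n+1) := by rw [pow_succ']; group
  -- the quotient is generated by the image of g, of order m
  have hQtop : ∀ b : G ⧸ V, b ∈ Subgroup.zpowers ((QuotientGroup.mk' V) g) := by
    intro b
    obtain ⟨a, rfl⟩ := QuotientGroup.mk'_surjective V b
    obtain ⟨k, hk⟩ := hgen a
    have h1 : (QuotientGroup.mk' V) (a * (g ^ k)⁻¹) = 1 :=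
      (QuotientGroup.eq_one_iff _).mpr hk
    rw [map_mul, map_inv, map_zpow] at h1
    exact ⟨k, (mul_inv_eq_one.mp h1).symm⟩
  have hordg : orderOf ((QuotientGroup.mk' V) g) = m := by
    have htop : Subgroup.zpowers ((QuotientGroup.mk' V) g) = ⊤ :=
      (Subgroup.eq_top_iff' _).mpr hQtop
    rw [← Nat.card_zpowers, htop, Subgroup.card_top, hcard]
  have hgnotV : ∀ n : ℕ, 0 < n → n < m → g ^ n ∉ V := by
    intro n hn hnm hmem
    have h1 : ((QuotientGroup.mk' V) g) ^ n = 1 := by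
      rw [← map_pow]; exact (QuotientGroup.eq_one_iff _).mpr hmem
    exact pow_ne_one_of_lt_orderOf (by omega : n ≠ 0) (hordg ▸ hnm) h1
  -- coercion to matrices
  let ψ : G →* Matrix (Fin 2) (Fin 2) ℂ := (Units.coeHom _).comp φ
  have hψinj : Function.Injective ψ := fun a b hab => hφ (Units.ext hab)
  have sqmap : ∀ u : G, u * u = 1 → ψ u * ψ u = 1 := by
    intro u hu; rw [← map_mul, hu, map_one]
  have negone : ∀ u : G, u * u = 1 → u ≠ 1 → (ψ u).det = 1 → ψ u = -1 := by
    intro u hu hu1 hdet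
    rcases invol_matrix_aux (ψ u) (sqmap u hu) hdet with h | h
    · exact absurd (hψinj (h.trans (map_one ψ).symm)) hu1
    · exact h
  have final : ∀ u v : G, u * u = 1 → v * v = 1 → u ≠ 1 → v ≠ 1 → u ≠ v →
      (ψ u).det = 1 → (ψ v).det = 1 → False := by
    intro u v hu hv hu1 hv1 huv hdu hdv
    exact huv (hψinj ((negone u hu hu1 hdu).trans (negone v hv hv1 hdv).symm))
  have detsq : ∀ u : G, u * u = 1 → (ψ u).det = 1 ∨ (ψ u).det = -1 := by
    intro u hu
    have h : (ψ u).det * (ψ u).det = 1 := by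
      rw [← Matrix.det_mul, sqmap u hu, Matrix.det_one]
    exact mul_self_eq_one_iff.mp h
  have detmul : ∀ u v : G, (ψ (u * v)).det = (ψ u).det * (ψ v).det := by
    intro u v; rw [map_mul, Matrix.det_mul]
  have hsq : ∀ u v : G, u * v = v * u → u * u = 1 → v * v = 1 → (u * v) * (u * v) = 1 := by
    intro u v hc hu hv
    calc (u * v) * (u * v) = u * (v * u) * v := by group
      _ = u * (u * v) * v := by rw [← hc]
      _ = (u * u) * (v * v) := by group
      _ = 1 := by rw [hu, hv, one_mul]
  have hxz1 : x * z ≠ 1 := by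
    intro h
    exact hxz ((eq_inv_of_mul_eq_one_left h).trans (inv_eq_of_mul_eq_one_left hz2))
  -- m = 2
  have hmeq : m = 2 := by
    by_contra hmne
    obtain ⟨k, hk⟩ := hmpow
    have hk2 : 2 ≤ k := by
      rcases k with _ | _ | k
      · rw [hk] at hm2; norm_num at hm2
      · rw [hk] at hmne; norm_num at hmne
      · omega
    set n := 2 ^ (k - 1) with hn
    have hnm : n < m := by
      rw [hk, hn]
      have : 2 ^ k = 2 ^ (k - 1) * 2 := by
        rw [← pow_succ]; congr 1; omega
      have hp : 0 < 2 ^ (k - 1) := Nat.pow_pos (by norm_num)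
      omega
    have hnpos : 0 < n := Nat.pow_pos (by norm_num)
    set h : G := g ^ n with hh
    have hh2 : h * h = 1 := by
      rw [hh, ← pow_add]
      have : n + n = m := by
        rw [hk, hn, ← two_mul, ← pow_succ']; congr 1; omega
      rw [this, hgm]
    have hzn : z ^ n = 1 := by
      have h2 : n = 2 * 2 ^ (k - 2) := by
        rw [hn, ← pow_succ']; congr 1; omega
      rw [h2, pow_mul, pow_two, hz2, one_pow]
    have hhx : h * x = x * h := by
      have := hgj n
      rw [hzn, mul_one] at this
      rw [hh]
      calc g ^ n * x = (g ^ n * x * (g ^ n)⁻¹) * g ^ n := by group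
        _ = x * g ^ n := by rw [this]
    have hhV : h ∉ V := hgnotV n hnpos hnm
    have hh1 : h ≠ 1 := fun he => hhV (he ▸ one_mem V)
    have hxh1 : x * h ≠ 1 := by
      intro he
      exact hhV ((eq_inv_of_mul_eq_one_right he) ▸ inv_mem hxmem)
    have hzh1 : z * h ≠ 1 := by
      intro he
      exact hhV ((eq_inv_of_mul_eq_one_right he) ▸ inv_mem hzmem)
    have hxh : x ≠ h := fun he => hhV (he ▸ hxmem)
    have hzh : z ≠ h := fun he => hhV (he ▸ hzmem)
    have hxzh : x * z ≠ h := fun he => hhV (he ▸ mul_mem hxmem hzmem)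
    have hzxh : z ≠ x * h := by
      intro he
      have : h = x * z := by
        calc h = x * (x * h) := by rw [← mul_assoc, hx2, one_mul]
          _ = x * z := by rw [← he]
      exact hhV (this ▸ mul_mem hxmem hzmem)
    have hxzh2 : x ≠ z * h := by
      intro he
      have : h = z * x := by
        calc h = z * (z * h) := by rw [← mul_assoc, hz2, one_mul]
          _ = z * x := by rw [← he]
      exact hhV (this ▸ mul_mem hzmem hxmem)
    have hxzxh : x * z ≠ x * h := by
      intro he
      exact hzh (mul_left_cancel he)
    -- squares
    have hxzsq : (x * z) * (x * z) = 1 := hsq x z (hzc x) hx2 hz2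
    have hxhsq : (x * h) * (x * h) = 1 := hsq x h hhx.symm hx2 hh2
    have hzhsq : (z * h) * (z * h) = 1 := hsq z h (hzc h).symm hz2 hh2
    rcases detsq x hx2 with dx | dx <;> rcases detsq z hz2 with dz | dz <;>
      rcases detsq h hh2 with dh | dh
    · exact final x z hx2 hz2 hx1 hz1 hxz dx dz
    · exact final x z hx2 hz2 hx1 hz1 hxz dx dz
    · exact final x h hx2 hh2 hx1 hh1 hxh dx dh
    · exact final x (z * h) hx2 hzhsq hx1 hzh1 hxzh2 dx
        (by rw [detmul, dz, dh]; norm_num)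
    · exact final z h hz2 hh2 hz1 hh1 hzh dz dh
    · exact final z (x * h) hz2 hxhsq hz1 hxh1 hzxh dz
        (by rw [detmul, dx, dh]; norm_num)
    · exact final (x * z) h hxzsq hh2 hxz1 hh1 hxzh
        (by rw [detmul, dx, dz]; norm_num) dh
    · exact final (x * z) (x * h) hxzsq hxhsq hxz1 hxh1 hxzxh
        (by rw [detmul, dx, dz]; norm_num)
        (by rw [detmul, dx, dh]; norm_num)
  -- now m = 2
  subst hmeq
  have hg2 : g * g = 1 := by rw [← pow_two]; exact hgm
  have hgV : g ∉ V := by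
    have := hgnotV 1 (by norm_num) (by norm_num)
    rwa [pow_one] at this
  have hg1 : g ≠ 1 := fun he => hgV (he ▸ one_mem V)
  have hginv : g⁻¹ = g := inv_eq_of_mul_eq_one_left hg2
  haveI : Fact (Nat.Prime 2) := ⟨by norm_num⟩
  have hord : orderOf g = 2 := orderOf_eq_prime hgm hg1
  refine ⟨hord, ?_⟩
  -- construct the isomorphism
  set a : G := g * x with ha
  have ha2 : a * a = z := by
    have h1 : (g * x) * (g * x) = (g * x * g⁻¹) * x := by rw [hginv]; group
    rw [ha, h1, hconj, mul_assoc, ← hzc x, ← mul_assoc, hx2, one_mul]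
  have ha4 : a ^ 4 = 1 := by
    have h4 : a ^ 4 = ((a * a) * a) * a := by
      rw [pow_succ, pow_succ, pow_succ, pow_one]
    rw [h4, mul_assoc (a * a) a a, ha2, hz2]
  have hga : g * a = x := by rw [ha, ← mul_assoc, hg2, one_mul]
  have hainv : a⁻¹ = x * g := by rw [ha, mul_inv_rev, hxinv, hginv]
  have hag : a * g = g * a⁻¹ := by rw [hainv, ha]; group
  have han : ∀ t : ℕ, a ^ t * g = g * (a ^ t)⁻¹ := by
    intro t
    induction t with
    | zero => simp
    | succ s ih =>
      calc a ^ (s+1) * g = a * (a ^ s * g) := by rw [pow_succ']; group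
        _ = a * (g * (a ^ s)⁻¹) := by rw [ih]
        _ = (a * g) * (a ^ s)⁻¹ := by group
        _ = g * a⁻¹ * (a ^ s)⁻¹ := by rw [hag]
        _ = g * (a ^ (s+1))⁻¹ := by rw [pow_succ']; group
  have hamod : ∀ t : ℕ, a ^ t = a ^ (t % 4) := by
    intro t
    conv_lhs => rw [← Nat.div_add_mod t 4]
    rw [pow_add, pow_mul, ha4, one_pow, one_mul]
  have hpadd : ∀ v w : ZMod 4, a ^ (v + w).val = a ^ v.val * a ^ w.val := by
    intro v w
    rw [ZMod.val_add, ← hamod, pow_add]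
  have hpneg : ∀ v : ZMod 4, a ^ (-v).val = (a ^ v.val)⁻¹ := by
    intro v
    have h1 := hpadd (-v) v
    rw [neg_add_cancel] at h1
    simp only [ZMod.val_zero, pow_zero] at h1
    exact eq_inv_of_mul_eq_one_left h1.symm
  have hsub : ∀ i j : ZMod 4, (a ^ i.val)⁻¹ * a ^ j.val = a ^ (j - i).val := by
    intro i j
    rw [sub_eq_add_neg, add_comm, hpadd, hpneg]
  -- the homomorphism
  let f : DihedralGroup 4 →* G := MonoidHom.mk' (fun w => match w with
    | .r i => a ^ i.val
    | .sr i => g * a ^ i.val) (by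
      rintro (i | i) (j | j)
      · exact hpadd i j
      · show g * a ^ (j - i).val = a ^ i.val * (g * a ^ j.val)
        calc g * a ^ (j - i).val = g * ((a ^ i.val)⁻¹ * a ^ j.val) := by rw [hsub]
          _ = (g * (a ^ i.val)⁻¹) * a ^ j.val := by group
          _ = (a ^ i.val * g) * a ^ j.val := by rw [← han]
          _ = a ^ i.val * (g * a ^ j.val) := by group
      · show g * a ^ (i + j).val = (g * a ^ i.val) * a ^ j.val
        rw [hpadd]; group
      · show a ^ (j - i).val = (g * a ^ i.val) * (g * a ^ j.val)
        calc a ^ (j - i).val = (a ^ i.val)⁻¹ * a ^ j.val := by rw [hsub]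
          _ = (g * g) * ((a ^ i.val)⁻¹ * a ^ j.val) := by rw [hg2, one_mul]
          _ = g * (g * (a ^ i.val)⁻¹) * a ^ j.val := by group
          _ = g * (a ^ i.val * g) * a ^ j.val := by rw [← han]
          _ = (g * a ^ i.val) * (g * a ^ j.val) := by group)
  have hfr : ∀ i : ZMod 4, f (.r i) = a ^ i.val := fun _ => rfl
  have hfsr : ∀ i : ZMod 4, f (.sr i) = g * a ^ i.val := fun _ => rfl
  -- injectivity
  have hz_ne : z ≠ 1 := hz1
  have hfi : Function.Injective f := by
    rw [injective_iff_map_eq_one]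
    rintro (i | i) h
    · rw [hfr] at h
      have hv : i.val < 4 := ZMod.val_lt i
      rcases (by omega : i.val = 0 ∨ i.val = 1 ∨ i.val = 2 ∨ i.val = 3) with h0 | h1 | h2 | h3
      · have : i = 0 := (ZMod.val_eq_zero i).mp h0
        rw [this]; rfl
      · rw [h1, pow_one] at h
        exact absurd (by rw [← ha2, h, one_mul] : z = 1) hz_ne
      · rw [h2, pow_two, ha2] at h
        exact absurd h hz_ne
      · exfalso
        have h4 : a ^ 3 * a = 1 := by rw [← pow_succ]; exact ha4
        rw [h3] at h
        rw [h, one_mul] at h4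
        exact hz_ne (by rw [← ha2, h4, one_mul])
    · exfalso
      rw [hfsr] at h
      have hgeq : g = (a ^ i.val)⁻¹ := eq_inv_of_mul_eq_one_left h
      have hcomm : g * a = a * g := by
        rw [hgeq]
        exact (((Commute.refl a).pow_left i.val).inv_left).eq
      have hgag : g * a * g⁻¹ = a⁻¹ := by
        rw [hga, hginv]; exact hainv.symm
      have haa : a⁻¹ = a := by
        rw [← hgag, hcomm, mul_inv_cancel_right]
      have : a * a = 1 := by nth_rewrite 1 [← haa]; rw [inv_mul_cancel]
      rw [ha2] at this
      exact hz_ne this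
  -- surjectivity
  have hg_mem : g ∈ f.range := ⟨.sr 0, by rw [hfsr]; simp⟩
  have hx_mem : x ∈ f.range := ⟨.sr 1, by rw [hfsr, show ((1 : ZMod 4)).val = 1 from rfl, pow_one, hga]⟩
  have hz_mem : z ∈ f.range := ⟨.r 2, by rw [hfr, show ((2 : ZMod 4)).val = 2 from rfl, pow_two, ha2]⟩
  have hVle : V ≤ f.range := by
    rw [hV]
    apply (Subgroup.closure_le _).mpr
    intro w hw
    simp only [Set.mem_insert_iff, Set.mem_singleton_iff] at hw
    rcases hw with rfl | rfl
    · exact hx_mem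
    · exact hz_mem
  have hfs : Function.Surjective f := by
    intro c
    obtain ⟨k, hk⟩ := hgen c
    have h1 : c * (g ^ k)⁻¹ ∈ f.range := hVle hk
    have h2 : g ^ k ∈ f.range := zpow_mem hg_mem k
    have h3 : c ∈ f.range := by
      have := mul_mem h1 h2
      rwa [inv_mul_cancel_right] at this
    exact h3
  exact ⟨(MulEquiv.ofBijective f ⟨hfi, hfs⟩).symm⟩
end

section
/- Let G be a group with central element z of order 2, element x of order 2 with x ∉ ⟨z⟩, and an element g with xgx⁻¹ = gz and g^m = z where m is a power of 2 and the image of g generates the cyclic quotient G/⟨x,z⟩ of order m. Then G is a semidirect product (ℤ/2m) : (ℤ/2) where the involution x acts on the cyclic group ⟨g⟩ of order 2m by g ↦ g^{m+1}. -/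
/-- Let `G` be a group with a central element `z` of order 2, an element `x` of order 2 with
`x ∉ ⟨z⟩`, and an element `g` with `x * g * x⁻¹ = g * z` and `g ^ m = z`, where `m` is a power
of 2 and the image of `g` generates the cyclic quotient `G / ⟨x, z⟩` of order `m`.  Then `G` is
the semidirect product `(ℤ/2m) : (ℤ/2)`, i.e. `g` has order `2m`, every element of `G` is of the
form `g ^ k` or `g ^ k * x`, `x ∉ ⟨g⟩` has order 2, and the involution `x` acts on the cyclic
group `⟨g⟩` of order `2m` by `g ↦ g ^ (m + 1)`. -/
theorem semidirect_of_conj_relation_and_gm_eq_z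
    {G : Type*} [Group G] (x z g : G) (m : ℕ)
    (hm2 : 2 ≤ m) (hmpow : ∃ k : ℕ, m = 2 ^ k)
    (hz : z ∈ Subgroup.center G) (hzo : orderOf z = 2)
    (hxo : orderOf x = 2) (hxz : x ∉ Subgroup.zpowers z)
    (hnorm : (Subgroup.closure ({x, z} : Set G)).Normal)
    (hgen : ∀ a : G, ∃ k : ℤ, a * (g ^ k)⁻¹ ∈ Subgroup.closure ({x, z} : Set G))
    (hcard : Nat.card (G ⧸ Subgroup.closure ({x, z} : Set G)) = m)
    (hconj : x * g * x⁻¹ = g * z) (hgm : g ^ m = z) :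
    orderOf g = 2 * m ∧
      (Subgroup.zpowers g).Normal ∧
      x ∉ Subgroup.zpowers g ∧
      x * g * x⁻¹ = g ^ (m + 1) ∧
      (∀ a : G, (∃ k : ℤ, a = g ^ k) ∨ (∃ k : ℤ, a = g ^ k * x)) := by
  have hz1 : z ≠ 1 := by
    intro h; rw [h, orderOf_one] at hzo; omega
  have hx2 : x * x = 1 := by
    have := pow_orderOf_eq_one x; rw [hxo, pow_two] at this; exact this
  have hz2 : z * z = 1 := by
    have := pow_orderOf_eq_one z; rw [hzo, pow_two] at this; exact this
  have hzc : ∀ a : G, z * a = a * z := fun a =>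
    ((Subgroup.mem_center_iff.mp hz) a).symm
  have hzx' : ∀ a : G, z * (x * a) = x * (z * a) := by
    intro a; rw [← mul_assoc, hzc x, mul_assoc]
  have hx2' : ∀ a : G, x * (x * a) = a := by
    intro a; rw [← mul_assoc, hx2, one_mul]
  have hz2' : ∀ a : G, z * (z * a) = a := by
    intro a; rw [← mul_assoc, hz2, one_mul]
  have hxinv : x⁻¹ = x := inv_eq_of_mul_eq_one_right hx2
  have hzinv : z⁻¹ = z := inv_eq_of_mul_eq_one_right hz2
  -- the conjugation relation in power form
  have hconj' : x * g * x⁻¹ = g ^ (m + 1) := by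
    rw [hconj, pow_succ', hgm]
  have hconjz : ∀ k : ℤ, x * g ^ k * x⁻¹ = g ^ ((m + 1 : ℤ) * k) := by
    intro k
    rw [zpow_mul, show ((m : ℤ) + 1) = ((m + 1 : ℕ) : ℤ) by push_cast; ring,
      zpow_natCast, ← hconj', conj_zpow]
  have hxgk : ∀ k : ℤ, x * g ^ k = g ^ ((m + 1 : ℤ) * k) * x := by
    intro k
    have := hconjz k
    rw [hxinv] at this
    rw [← this, mul_assoc, hx2, mul_one]
  -- description of the closure of {x, z}
  have hcl : ∀ h ∈ Subgroup.closure ({x, z} : Set G),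
      h = 1 ∨ h = x ∨ h = z ∨ h = x * z := by
    intro h hh
    induction hh using Subgroup.closure_induction with
    | mem a ha =>
      rcases ha with ha | ha
      · exact Or.inr (Or.inl ha)
      · exact Or.inr (Or.inr (Or.inl ha))
    | one => exact Or.inl rfl
    | mul a b _ _ ha hb =>
      rcases ha with rfl | rfl | rfl | rfl <;> rcases hb with rfl | rfl | rfl | rfl <;>
        simp only [one_mul, mul_one, mul_assoc, hzc, hx2', hz2', hx2, hz2] <;> tauto
    | inv a _ ha =>
      rcases ha with rfl | rfl | rfl | rfl <;>
        simp only [inv_one, hxinv, hzinv, mul_inv_rev, hzc, one_mul, mul_one] <;> tauto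
  -- classification of elements of G
  have hclass : ∀ a : G, (∃ k : ℤ, a = g ^ k) ∨ (∃ k : ℤ, a = g ^ k * x) := by
    intro a
    obtain ⟨k, hk⟩ := hgen a
    have ha : a = (a * (g ^ k)⁻¹) * g ^ k := by group
    rcases hcl _ hk with h | h | h | h <;> rw [h] at ha
    · left; exact ⟨k, by simpa using ha⟩
    · right
      refine ⟨(m + 1 : ℤ) * k, ?_⟩
      rw [ha, hxgk k]
    · left
      refine ⟨(m : ℤ) + k, ?_⟩
      rw [ha, ← hgm, zpow_add, zpow_natCast]
    · right
      refine ⟨(m + 1 : ℤ) * ((m : ℤ) + k), ?_⟩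
      rw [ha, mul_assoc, ← hgm, ← zpow_natCast g m, ← zpow_add, hxgk]
  -- order of g
  have hord : orderOf g = 2 * m := by
    obtain ⟨k, rfl⟩ := hmpow
    have h2m : g ^ (2 * 2 ^ k) = 1 := by
      rw [mul_comm, pow_mul, hgm, pow_two, hz2]
    have hdvd : orderOf g ∣ 2 ^ (k + 1) := by
      rw [pow_succ, mul_comm]
      exact orderOf_dvd_of_pow_eq_one h2m
    obtain ⟨j, hj, hje⟩ := (Nat.dvd_prime_pow Nat.prime_two).mp hdvd
    rcases Nat.lt_or_ge j (k + 1) with hlt | hge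
    · exfalso
      have : orderOf g ∣ 2 ^ k := by
        rw [hje]; exact pow_dvd_pow 2 (by omega)
      have : g ^ (2 ^ k) = 1 := orderOf_dvd_iff_pow_eq_one.mp this
      rw [hgm] at this
      exact hz1 this
    · have : j = k + 1 := by omega
      rw [hje, this, pow_succ, mul_comm]
  -- x not a power of g
  have hxng : x ∉ Subgroup.zpowers g := by
    intro h
    obtain ⟨j, hj⟩ := h
    have hcomm : x * g = g * x := by
      rw [← hj, ← zpow_one_add, ← zpow_add_one, add_comm]
    have : x * g * x⁻¹ = g := by
      rw [hcomm, mul_assoc, mul_inv_cancel, mul_one]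
    rw [hconj] at this
    exact hz1 (mul_left_cancel (this.trans (mul_one g).symm))
  -- normality of zpowers g
  have hnormg : (Subgroup.zpowers g).Normal := by
    constructor
    intro n hn a
    obtain ⟨j, rfl⟩ := Subgroup.mem_zpowers_iff.mp hn
    rcases hclass a with ⟨k, rfl⟩ | ⟨k, rfl⟩
    · exact Subgroup.mem_zpowers_iff.mpr ⟨j, by group⟩
    · apply Subgroup.mem_zpowers_iff.mpr
      refine ⟨(m + 1 : ℤ) * j, ?_⟩
      have h1 : g ^ k * x * g ^ j * (g ^ k * x)⁻¹ = g ^ k * (x * g ^ j * x⁻¹) * (g ^ k)⁻¹ := by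
        group
      rw [h1, hconjz j]
      group
  exact ⟨hord, hnormg, hxng, hconj', hclass⟩
end
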